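/- Let G be a finite non-cyclic group and suppose the quotient non-cyclic graph C_{G/Cyc(G)} is Hamiltonian. Then the non-cyclic graph C_G is Hamiltonian. -/

import Mathlib

/-- The cyclicizer of a group: elements generating a cyclic subgroup with every element. -/
def cyclicizer (G : Type*) [Group G] : Set G :=
  {x | ∀ y : G, IsCyclic (Subgroup.closure {x, y} : Subgroup G)}

/-- The relative cyclicizer of an element. -/
def relCyclicizer {G : Type*} [Group G] (x : G) : Set G :=
  {g | IsCyclic (Subgroup.closure {g, x} : Subgroup G)}

/-- A group is locally cyclic if every finitely generated subgroup is cyclic. -/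
def IsLocallyCyclic (G : Type*) [Group G] : Prop :=
  ∀ H : Subgroup G, H.FG → IsCyclic H

/-- The non-cyclic graph of a group. -/
def noncyclicGraph (G : Type*) [Group G] :
    SimpleGraph {g : G // g ∉ cyclicizer G} where
  Adj x y := x ≠ y ∧ ¬ IsCyclic (Subgroup.closure {(x : G), (y : G)} : Subgroup G)
  symm := ⟨fun x y h => ⟨h.1.symm, by rw [Set.pair_comm]; exact h.2⟩⟩
  loopless := ⟨fun x h => h.1 rfl⟩

/-- The cyclic graph of a group (complement of the non-cyclic graph). -/
def cyclicGraph (G : Type*) [Group G] :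
    SimpleGraph {g : G // g ∉ cyclicizer G} where
  Adj x y := x ≠ y ∧ IsCyclic (Subgroup.closure {(x : G), (y : G)} : Subgroup G)
  symm := ⟨fun x y h => ⟨h.1.symm, by rw [Set.pair_comm]; exact h.2⟩⟩
  loopless := ⟨fun x h => h.1 rfl⟩

/-- A graph has clique number `n` if it has a clique of size `n` and no larger clique. -/
def hasCliqueNum {V : Type*} (Γ : SimpleGraph V) (n : ℕ) : Prop :=
  (∃ s : Finset V, Γ.IsNClique n s) ∧ ∀ s : Finset V, Γ.IsClique (s : Set V) → s.card ≤ n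

/-! ### Auxiliary list lemmas -/

namespace List
variable {α β : Type*} {R : β → β → Prop} {f : α → List β}

lemma mem_head?_flatMap' {l : List α} {y : β} (hy : y ∈ (l.flatMap f).head?) :
    ∃ b ∈ l, y ∈ (f b).head? := by
  induction l with
  | nil => simp at hy
  | cons a l ih =>
    rw [flatMap_cons] at hy
    cases hfa : f a with
    | nil =>
      rw [hfa, nil_append] at hy
      obtain ⟨b, hb, hyb⟩ := ih hy
      exact ⟨b, mem_cons_of_mem _ hb, hyb⟩
    | cons c cs =>
      rw [hfa, cons_append, head?_cons] at hy
      simp only [Option.mem_def, Option.some.injEq] at hy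
      exact ⟨a, mem_cons_self, by simp [hfa, hy]⟩

lemma mem_getLast?_flatMap' {l : List α} {x : β} (hx : x ∈ (l.flatMap f).getLast?) :
    ∃ a ∈ l, x ∈ (f a).getLast? := by
  induction l using List.reverseRecOn with
  | nil => simp at hx
  | append_singleton l a ih =>
    rw [flatMap_append, flatMap_cons, flatMap_nil, append_nil] at hx
    cases hfa : f a with
    | nil =>
      rw [hfa, append_nil] at hx
      obtain ⟨b, hb, hxb⟩ := ih hx
      exact ⟨b, mem_append_left _ hb, hxb⟩
    | cons c cs =>
      rw [getLast?_append_of_ne_nil _ (by rw [hfa]; simp)] at hx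
      exact ⟨a, by simp, hx⟩

lemma chain'_flatMap' {l : List α} (h1 : ∀ a ∈ l, (f a).Chain' R)
    (h3 : ∀ a ∈ l, ∀ b ∈ l, ∀ x ∈ (f a).getLast?, ∀ y ∈ (f b).head?, R x y) :
    (l.flatMap f).Chain' R := by
  induction l with
  | nil => exact List.isChain_nil
  | cons a l ih =>
    rw [flatMap_cons]
    refine IsChain.append (h1 a (by simp)) (ih (fun b hb => h1 b (by simp [hb]))
      (fun b hb c hc => h3 b (by simp [hb]) c (by simp [hc]))) ?_
    intro x hx y hy
    obtain ⟨b, hb, hyb⟩ := mem_head?_flatMap' hy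
    exact h3 a (by simp) b (by simp [hb]) x hx y hyb

end List

/-! ### Auxiliary graph lemmas: Hamiltonicity via cyclic lists -/

namespace SimpleGraph
variable {V : Type*} {G : SimpleGraph V}

lemma exists_walk_of_chain' (a : V) (l : List V) (h : List.Chain G.Adj a l) :
    ∃ (e : V) (w : G.Walk a e), w.support = a :: l := by
  induction l generalizing a with
  | nil => exact ⟨a, Walk.nil, rfl⟩
  | cons b l ih =>
    rw [List.Chain, List.isChain_cons_cons] at h
    obtain ⟨e, w, hw⟩ := ih b h.2
    exact ⟨e, Walk.cons h.1 w, by simp [hw]⟩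

lemma closing_edge_not_mem' {b e : V} (w : G.Walk b e) (hnd : w.support.Nodup)
    (hlen : 2 ≤ w.length) : s(e, b) ∉ w.edges := by
  cases w with
  | nil => simp at hlen
  | @cons _ b₂ _ h w' =>
    simp only [Walk.edges_cons, List.mem_cons]
    rw [Walk.support_cons, List.nodup_cons] at hnd
    have hb : b ∉ w'.support := hnd.1
    have he : e ∈ w'.support := Walk.end_mem_support w'
    rintro (heq | hmem)
    · rw [Sym2.eq_iff] at heq
      rcases heq with ⟨rfl, rfl⟩ | ⟨rfl, -⟩
      · exact hb he
      · have : w'.IsPath := Walk.IsPath.mk' hnd.2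
        rw [Walk.isPath_iff_eq_nil] at this
        subst this
        simp at hlen
    · exact hb (Walk.snd_mem_support_of_mem_edges w' hmem)

lemma isHamiltonian_of_cyclicList' [DecidableEq V] [Fintype V] (l : List V)
    (hlen : 3 ≤ l.length) (hnd : l.Nodup) (hcov : ∀ v, v ∈ l)
    (hch : l.Chain' G.Adj)
    (hwrap : ∀ x ∈ l.getLast?, ∀ y ∈ l.head?, G.Adj x y) :
    G.IsHamiltonian := by
  intro _
  obtain ⟨a, l', rfl⟩ : ∃ a l', l = a :: l' := by
    cases l with
    | nil => simp at hlen
    | cons a l' => exact ⟨a, l', rfl⟩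
  obtain ⟨e, w, hw⟩ := exists_walk_of_chain' a l' hch
  have hsome : (a :: l').getLast? = some e := by
    rw [← hw, List.getLast?_eq_getLast (by simp)]
    exact congrArg some w.getLast_support
  have hwlen2 : 2 ≤ w.length := by
    have h1 : w.length + 1 = l'.length + 1 := by
      rw [← Walk.length_support, hw]; simp
    simp only [List.length_cons] at hlen
    omega
  have hadj : G.Adj e a := hwrap e hsome a rfl
  have hnd' : w.support.Nodup := hw ▸ hnd
  refine ⟨e, Walk.cons hadj w, ?_⟩
  rw [Walk.isHamiltonianCycle_iff_isCycle_and_support_count_tail_eq_one]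
  constructor
  · rw [Walk.cons_isCycle_iff]
    exact ⟨Walk.IsPath.mk' hnd', closing_edge_not_mem' w hnd' hwlen2⟩
  · intro v
    rw [Walk.support_cons, List.tail_cons, hw]
    exact List.count_eq_one_of_mem hnd (hcov v)

lemma exists_cyclicList_of_isHamiltonian' [DecidableEq V] [Fintype V]
    (hG : G.IsHamiltonian) (hcard : Fintype.card V ≠ 1) :
    ∃ l : List V, 3 ≤ l.length ∧ l.Nodup ∧ (∀ v, v ∈ l) ∧ l.Chain' G.Adj ∧
      ∀ x ∈ l.getLast?, ∀ y ∈ l.head?, G.Adj x y := by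
  obtain ⟨a, p, hp⟩ := hG hcard
  have hcyc := hp.isCycle
  have hcount := (Walk.isHamiltonianCycle_iff_isCycle_and_support_count_tail_eq_one.mp hp).2
  refine ⟨p.support.tail, ?_, ?_, ?_, ?_, ?_⟩
  · have h1 : p.support.length = p.length + 1 := Walk.length_support p
    have h2 := hcyc.three_le_length
    have h3 : p.support.tail.length = p.support.length - 1 := List.length_tail
    omega
  · exact List.nodup_iff_count_le_one.mpr fun v => le_of_eq (hcount v)
  · intro v
    rw [← List.count_pos_iff, hcount v]
    norm_num
  · exact (p.isChain_adj_support).tail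
  · have hsup : p.support = a :: p.support.tail := Walk.support_eq_cons p
    obtain ⟨b, t, ht⟩ : ∃ b t, p.support.tail = b :: t := by
      cases h : p.support.tail with
      | nil =>
        exfalso
        have h4 := Walk.length_support p
        have h2 := hcyc.three_le_length
        have h5 := congrArg List.length h
        have h6 : p.support.tail.length = p.support.length - 1 := List.length_tail
        simp only [List.length_nil] at h5
        omega
      | cons b t => exact ⟨b, t, rfl⟩
    intro x hx y hy
    rw [ht] at hx hy
    simp only [List.head?_cons, Option.mem_def, Option.some.injEq] at hy
    have hxa : x = a := by
      have h1 : p.support.getLast? = some a := by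
        rw [List.getLast?_eq_getLast (by simp)]
        exact congrArg some (Walk.getLast_support p)
      rw [hsup, ht, List.getLast?_cons_cons] at h1
      rw [h1] at hx
      simp only [Option.mem_def, Option.some.injEq] at hx
      exact hx.symm
    have hab : G.Adj a b := by
      have := p.isChain_adj_support
      rw [hsup, ht, List.isChain_cons_cons] at this
      exact this.1
    rw [hxa, ← hy]
    exact hab

end SimpleGraph

/-! ### Group-theoretic lemmas on the cyclicizer -/

section GroupLemmas

/-- Subgroup contained in a cyclic subgroup is cyclic. -/
lemma isCyclic_of_le' {G : Type*} [Group G] {H K : Subgroup G} (h : H ≤ K)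
    (hK : IsCyclic K) : IsCyclic H :=
  isCyclic_of_surjective (Subgroup.subgroupOfEquivOfLe h).toMonoidHom
    (Subgroup.subgroupOfEquivOfLe h).surjective

lemma isCyclic_map' {G H : Type*} [Group G] [Group H] (f : G →* H) {K : Subgroup G}
    (hK : IsCyclic K) : IsCyclic (K.map f) := by
  have : Function.Surjective ((f.subgroupMap K)) := f.subgroupMap_surjective K
  exact isCyclic_of_surjective _ this

variable {G : Type*} [Group G]

lemma isCyclic_zpowers' (a : G) : IsCyclic (Subgroup.zpowers a) := by
  refine ⟨⟨a, Subgroup.mem_zpowers a⟩, fun x => ?_⟩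
  obtain ⟨n, hn⟩ := Subgroup.mem_zpowers_iff.mp x.2
  exact ⟨n, Subtype.ext (by simpa using hn)⟩

lemma isCyclic_closure_pair_self (a : G) :
    IsCyclic (Subgroup.closure {a, a} : Subgroup G) := by
  rw [Set.pair_eq_singleton, ← Subgroup.zpowers_eq_closure]
  exact isCyclic_zpowers' a

lemma mem_zpowers_of_isCyclic_closure {x y : G}
    (h : IsCyclic (Subgroup.closure {x, y} : Subgroup G)) :
    ∃ g : G, g ∈ Subgroup.closure {x, y} ∧ x ∈ Subgroup.zpowers g ∧ y ∈ Subgroup.zpowers g := by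
  obtain ⟨⟨g, hg⟩, hgen⟩ := h
  refine ⟨g, hg, ?_, ?_⟩
  · have hx : x ∈ Subgroup.closure ({x, y} : Set G) :=
      Subgroup.subset_closure (by simp)
    obtain ⟨n, hn⟩ := hgen ⟨x, hx⟩
    exact ⟨n, by simpa using congrArg Subtype.val hn⟩
  · have hy : y ∈ Subgroup.closure ({x, y} : Set G) :=
      Subgroup.subset_closure (by simp)
    obtain ⟨n, hn⟩ := hgen ⟨y, hy⟩
    exact ⟨n, by simpa using congrArg Subtype.val hn⟩

/-- Any finset of the cyclicizer is contained in the zpowers of a cyclicizer element. -/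
lemma cyclicizer_finset_zpowers (N : Subgroup G) (hN : (N : Set G) = cyclicizer G)
    (s : Finset G) (hs : ↑s ⊆ (N : Set G)) :
    ∃ w ∈ N, ∀ a ∈ s, a ∈ Subgroup.zpowers w := by
  classical
  induction s using Finset.induction with
  | empty => exact ⟨1, one_mem N, by simp⟩
  | @insert a s ha ih =>
    obtain ⟨w, hwN, hw⟩ := ih (fun x hx => hs (by simp [hx]))
    have haN : a ∈ N := hs (by simp)
    have hacyc : a ∈ cyclicizer G := by rw [← hN]; exact haN
    have : IsCyclic (Subgroup.closure {a, w} : Subgroup G) := hacyc w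
    obtain ⟨g, hgmem, hag, hwg⟩ := mem_zpowers_of_isCyclic_closure this
    have hgN : g ∈ N := by
      have : Subgroup.closure ({a, w} : Set G) ≤ N := by
        rw [Subgroup.closure_le]
        rintro x (rfl | rfl)
        · exact haN
        · exact hwN
      exact this hgmem
    refine ⟨g, hgN, ?_⟩
    intro b hb
    rcases Finset.mem_insert.mp hb with rfl | hb
    · exact hag
    · exact (Subgroup.zpowers_le.mpr hwg) (hw b hb)

variable [Fintype G] (N : Subgroup G) [N.Normal]

/-- The quotient map image of a two-generated closure. -/
lemma closure_pair_map (x y : G) :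
    (Subgroup.closure {x, y}).map (QuotientGroup.mk' N) =
      Subgroup.closure {(x : G ⧸ N), (y : G ⧸ N)} := by
  rw [MonoidHom.map_closure]
  congr 1
  simp [Set.image_insert_eq]

lemma isCyclic_quot_of_isCyclic {x y : G}
    (h : IsCyclic (Subgroup.closure {x, y} : Subgroup G)) :
    IsCyclic (Subgroup.closure {(x : G ⧸ N), (y : G ⧸ N)} : Subgroup (G ⧸ N)) := by
  rw [← closure_pair_map N x y]
  exact isCyclic_map' _ h

lemma isCyclic_of_isCyclic_quot (hN : (N : Set G) = cyclicizer G) {x y : G}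
    (h : IsCyclic (Subgroup.closure {(x : G ⧸ N), (y : G ⧸ N)} : Subgroup (G ⧸ N))) :
    IsCyclic (Subgroup.closure {x, y} : Subgroup G) := by
  classical
  obtain ⟨g, _, hxg, hyg⟩ := mem_zpowers_of_isCyclic_closure h
  obtain ⟨z, rfl⟩ := QuotientGroup.mk'_surjective N g
  obtain ⟨w, hwN, hw⟩ := cyclicizer_finset_zpowers N hN (Set.toFinite (N : Set G)).toFinset
    (by rw [Set.Finite.coe_toFinset])
  have hwall : ∀ a ∈ N, a ∈ Subgroup.zpowers w := fun a ha => hw a (by simpa using ha)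
  have hwcyc : w ∈ cyclicizer G := by rw [← hN]; exact hwN
  have hzw : IsCyclic (Subgroup.closure {z, w} : Subgroup G) := by
    rw [Set.pair_comm]; exact hwcyc z
  refine isCyclic_of_le' ?_ hzw
  rw [Subgroup.closure_le]
  have key : ∀ a : G, ((a : G ⧸ N) ∈ Subgroup.zpowers ((z : G ⧸ N))) →
      a ∈ Subgroup.closure ({z, w} : Set G) := by
    intro a ⟨n, hn⟩
    have hz : z ∈ Subgroup.closure ({z, w} : Set G) := Subgroup.subset_closure (by simp)
    have : (z ^ n)⁻¹ * a ∈ N := by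
      rw [← QuotientGroup.eq_one_iff]
      have hn' : ((z : G ⧸ N)) ^ n = (a : G ⧸ N) := hn
      rw [QuotientGroup.mk_mul, QuotientGroup.mk_inv, QuotientGroup.mk_zpow, hn',
        inv_mul_cancel]
    have hmem : (z ^ n)⁻¹ * a ∈ Subgroup.closure ({z, w} : Set G) := by
      obtain ⟨m, hm⟩ := hwall _ this
      rw [← hm]
      exact zpow_mem (Subgroup.subset_closure (by simp)) m
    have := mul_mem (zpow_mem hz n) hmem
    simpa using this
  rintro a (rfl | rfl)
  · exact key _ hxg
  · exact key _ hyg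

variable {N}

lemma mk_mem_cyclicizer_of_mem {x : G} (hx : x ∈ cyclicizer G) :
    (x : G ⧸ N) ∈ cyclicizer (G ⧸ N) := by
  intro yq
  obtain ⟨y, rfl⟩ := QuotientGroup.mk'_surjective N yq
  exact isCyclic_quot_of_isCyclic N (hx y)

lemma mem_cyclicizer_of_mk_mem (hN : (N : Set G) = cyclicizer G) {x : G}
    (hx : (x : G ⧸ N) ∈ cyclicizer (G ⧸ N)) : x ∈ cyclicizer G :=
  fun y => isCyclic_of_isCyclic_quot N hN (hx (y : G ⧸ N))

lemma mk_not_mem_cyclicizer (hN : (N : Set G) = cyclicizer G) {x : G}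
    (hx : x ∉ cyclicizer G) : (x : G ⧸ N) ∉ cyclicizer (G ⧸ N) :=
  fun hc => hx (mem_cyclicizer_of_mk_mem hN hc)

end GroupLemmas

open scoped Classical in
theorem noncyclicGraph_hamiltonian_of_quotient_hamiltonian
    {G : Type*} [Group G] [Fintype G] (hG : ¬ IsCyclic G)
    (N : Subgroup G) [N.Normal] (hN : (N : Set G) = cyclicizer G)
    (h : (noncyclicGraph (G ⧸ N)).IsHamiltonian) :
    (noncyclicGraph G).IsHamiltonian := by
  intro hcard
  -- the quotient graph has at least one vertex; its vertex count is not 1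
  have hq2 : Fintype.card {g : G ⧸ N // g ∉ cyclicizer (G ⧸ N)} ≠ 1 := by
    intro h1
    -- a unique vertex u
    obtain ⟨u, hu⟩ := Fintype.card_eq_one_iff.mp h1
    obtain ⟨y, hy⟩ : ∃ y : G ⧸ N, ¬ IsCyclic (Subgroup.closure {(u : G ⧸ N), y} :
        Subgroup (G ⧸ N)) := by
      by_contra hc
      push_neg at hc
      exact u.2 hc
    have hyv : y ∉ cyclicizer (G ⧸ N) := by
      intro hyc
      exact hy (by rw [Set.pair_comm]; exact hyc (u : G ⧸ N))
    have hne : (u : G ⧸ N) ≠ y := by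
      intro heq
      rw [← heq] at hy
      exact hy (isCyclic_closure_pair_self _)
    exact hne (congrArg Subtype.val (hu ⟨y, hyv⟩)).symm
  obtain ⟨LQ, hlen, hnd, hcov, hch, hwrap⟩ :=
    SimpleGraph.exists_cyclicList_of_isHamiltonian' h hq2
  -- the lifted vertices
  have hmk : ∀ (u : {g : G ⧸ N // g ∉ cyclicizer (G ⧸ N)}) (n : N),
      ((Quotient.out (u : G ⧸ N) * (n : G) : G) : G ⧸ N) = (u : G ⧸ N) := by
    intro u n
    rw [QuotientGroup.mk_mul, (QuotientGroup.eq_one_iff _).mpr n.2, mul_one]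
    exact QuotientGroup.out_eq' _
  set vert : {g : G ⧸ N // g ∉ cyclicizer (G ⧸ N)} → N → {g : G // g ∉ cyclicizer G} :=
    fun u n => ⟨Quotient.out (u : G ⧸ N) * (n : G),
      fun hc => u.2 (hmk u n ▸ mk_mem_cyclicizer_of_mem hc)⟩ with hvert
  have hvert_val : ∀ u n, ((vert u n : G) : G ⧸ N) = (u : G ⧸ N) := fun u n => hmk u n
  -- adjacency lifts
  have hAdj : ∀ (u u' : {g : G ⧸ N // g ∉ cyclicizer (G ⧸ N)}) (n n' : N),
      (noncyclicGraph (G ⧸ N)).Adj u u' →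
      (noncyclicGraph G).Adj (vert u n) (vert u' n') := by
    intro u u' n n' hadj
    obtain ⟨hne, hnc⟩ := (show _ ∧ _ from hadj)
    refine (show _ ∧ _ from ⟨?_, ?_⟩)
    · intro heq
      apply hne
      apply Subtype.ext
      rw [← hvert_val u n, ← hvert_val u' n', heq]
    · intro hcyc
      apply hnc
      have := isCyclic_quot_of_isCyclic N hcyc
      rwa [hvert_val, hvert_val] at this
  -- injectivity facts
  have hinj : ∀ (u u' : {g : G ⧸ N // g ∉ cyclicizer (G ⧸ N)}) (n n' : N),
      vert u n = vert u' n' → u = u' ∧ n = n' := by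
    intro u u' n n' heq
    have hval : (vert u n : G) = (vert u' n' : G) := congrArg Subtype.val heq
    have huu : u = u' := by
      apply Subtype.ext
      rw [← hvert_val u n, ← hvert_val u' n', hval]
    refine ⟨huu, ?_⟩
    apply Subtype.ext
    have : Quotient.out (u : G ⧸ N) * (n : G) = Quotient.out (u' : G ⧸ N) * (n' : G) := hval
    rw [← huu] at this
    exact mul_left_cancel this
  set LN : List N := (Finset.univ : Finset N).toList with hLN
  have hLNnd : LN.Nodup := Finset.nodup_toList _
  have hLNmem : ∀ n : N, n ∈ LN := fun n => by simp [hLN]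
  have hLNne : LN ≠ [] := by
    intro hemp
    have := hLNmem 1
    rw [hemp] at this
    simp at this
  set bigL : List {g : G // g ∉ cyclicizer G} :=
    LN.flatMap (fun n => LQ.map (fun u => vert u n)) with hbigL
  refine SimpleGraph.isHamiltonian_of_cyclicList' (G := noncyclicGraph G) bigL ?_ ?_ ?_ ?_ ?_ hcard
  · -- length
    rw [hbigL, List.length_flatMap]
    have heq : (List.map (List.length ∘ fun n => List.map (fun u => vert u n) LQ) LN).sum
        = LN.length * LQ.length := by
      simp [Function.comp_def, List.map_const', List.sum_replicate, smul_eq_mul, Nat.mul_comm]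
    rw [Function.comp_def] at heq
    rw [heq]
    have h1 : 1 ≤ LN.length := List.length_pos_iff.mpr hLNne
    calc 3 ≤ LQ.length := hlen
    _ ≤ LN.length * LQ.length := Nat.le_mul_of_pos_left _ (by omega)
  · -- nodup
    rw [hbigL, List.nodup_flatMap]
    constructor
    · intro n _
      exact hnd.map (fun u u' heq => (hinj u u' n n heq).1)
    · apply List.Pairwise.imp ?_ hLNnd
      intro n n' hne x hx hx'
      simp only [List.mem_map] at hx hx'
      obtain ⟨u, _, hu⟩ := hx
      obtain ⟨u', _, hu'⟩ := hx'
      exact hne (hinj u u' n n' (hu.trans hu'.symm)).2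
  · -- coverage
    intro v
    have hvq : ((v : G) : G ⧸ N) ∉ cyclicizer (G ⧸ N) := mk_not_mem_cyclicizer hN v.2
    set u : {g : G ⧸ N // g ∉ cyclicizer (G ⧸ N)} := ⟨((v : G) : G ⧸ N), hvq⟩ with hu
    have hnmem : (Quotient.out (u : G ⧸ N))⁻¹ * (v : G) ∈ N := by
      rw [← QuotientGroup.eq_one_iff, QuotientGroup.mk_mul, QuotientGroup.mk_inv,
        QuotientGroup.out_eq']
      simp [hu]
    rw [hbigL, List.mem_flatMap]
    refine ⟨⟨_, hnmem⟩, hLNmem _, ?_⟩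
    rw [List.mem_map]
    refine ⟨u, hcov u, ?_⟩
    apply Subtype.ext
    show Quotient.out (u : G ⧸ N) * ((Quotient.out (u : G ⧸ N))⁻¹ * (v : G)) = (v : G)
    rw [← mul_assoc, mul_inv_cancel, one_mul]
  · -- chain
    rw [hbigL]
    apply List.chain'_flatMap'
    · intro n _
      rw [List.Chain', List.isChain_map]
      exact hch.imp (fun u u' hadj => hAdj u u' n n hadj)
    · intro n _ n' _ x hx y hy
      rw [List.getLast?_map] at hx
      rw [List.head?_map] at hy
      obtain ⟨u, hu, rfl⟩ : ∃ u, u ∈ LQ.getLast? ∧ vert u n = x := by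
        cases hg : LQ.getLast? with
        | none => rw [hg] at hx; simp at hx
        | some u =>
          rw [hg] at hx
          simp only [Option.map_some, Option.mem_def, Option.some.injEq] at hx
          exact ⟨u, by simp [hg], hx⟩
      obtain ⟨u', hu', rfl⟩ : ∃ u', u' ∈ LQ.head? ∧ vert u' n' = y := by
        cases hg : LQ.head? with
        | none => rw [hg] at hy; simp at hy
        | some u' =>
          rw [hg] at hy
          simp only [Option.map_some, Option.mem_def, Option.some.injEq] at hy
          exact ⟨u', by simp [hg], hy⟩
      exact hAdj _ _ _ _ (hwrap u hu u' hu')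
  · -- wrap around
    intro x hx y hy
    rw [hbigL] at hx hy
    obtain ⟨n, _, hx⟩ := List.mem_getLast?_flatMap' hx
    obtain ⟨n', _, hy⟩ := List.mem_head?_flatMap' hy
    rw [List.getLast?_map] at hx
    rw [List.head?_map] at hy
    obtain ⟨u, hu, rfl⟩ : ∃ u, u ∈ LQ.getLast? ∧ vert u n = x := by
      cases hg : LQ.getLast? with
      | none => rw [hg] at hx; simp at hx
      | some u =>
        rw [hg] at hx
        simp only [Option.map_some, Option.mem_def, Option.some.injEq] at hx
        exact ⟨u, by simp [hg], hx⟩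
    obtain ⟨u', hu', rfl⟩ : ∃ u', u' ∈ LQ.head? ∧ vert u' n' = y := by
      cases hg : LQ.head? with
      | none => rw [hg] at hy; simp at hy
      | some u' =>
        rw [hg] at hy
        simp only [Option.map_some, Option.mem_def, Option.some.injEq] at hy
        exact ⟨u', by simp [hg], hy⟩
    exact hAdj _ _ _ _ (hwrap u hu u' hu')
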